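/- Let H : (0,∞) → ℝ be twice differentiable with lim_{t→∞} t·H''(t) = ∞. Then for every real α > 1, lim_{t→∞} (H(αt) − α·H(t))/t = ∞. -/

import Mathlib

open Filter

/-- If `H` is twice differentiable on `(0,∞)` and `t · H''(t) → ∞` as `t → ∞`, then
for every `α > 1` one has `(H(αt) − α H(t))/t → ∞` as `t → ∞`. -/
theorem superlinear_of_tHpp_tendsto_atTop (H : ℝ → ℝ)
    (h1 : ∀ t : ℝ, 0 < t → DifferentiableAt ℝ H t)
    (h2 : ∀ t : ℝ, 0 < t → DifferentiableAt ℝ (deriv H) t)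
    (hlim : Tendsto (fun t : ℝ => t * deriv (deriv H) t) atTop atTop)
    (α : ℝ) (hα : 1 < α) :
    Tendsto (fun t : ℝ => (H (α * t) - α * H t) / t) atTop atTop := by
  have hα0 : (0 : ℝ) < α := by linarith
  set G : ℝ → ℝ := fun t => H (α * t) - α * H t with hG
  set φ : ℝ → ℝ := fun t => α * deriv H (α * t) - α * deriv H t with hφ
  -- G has derivative φ on (0, ∞)
  have hGd : ∀ t : ℝ, 0 < t → HasDerivAt G (φ t) t := by
    intro t ht
    have hαt : 0 < α * t := mul_pos hα0 ht
    have d1 : HasDerivAt (fun s : ℝ => H (α * s)) (deriv H (α * t) * α) t := by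
      have := ((h1 (α * t) hαt).hasDerivAt).comp t ((hasDerivAt_id t).const_mul α)
      simpa [Function.comp_def] using this
    have d2 : HasDerivAt (fun s : ℝ => α * H s) (α * deriv H t) t :=
      ((h1 t ht).hasDerivAt).const_mul α
    have := d1.sub d2
    simpa [hG, hφ, mul_comm, Pi.sub_def] using this
  -- key bound on φ
  have keyφ : ∀ M : ℝ, 0 ≤ M → ∃ T : ℝ, 1 ≤ T ∧ ∀ t : ℝ, T ≤ t → (α - 1) * M ≤ φ t := by
    intro M hM
    obtain ⟨T₀, hT₀⟩ := (tendsto_atTop_atTop.1 hlim) M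
    refine ⟨max T₀ 1, le_max_right _ _, fun t ht => ?_⟩
    have ht1 : (1 : ℝ) ≤ t := le_trans (le_max_right _ _) ht
    have ht0 : 0 < t := by linarith
    have htαt : t < α * t := by nlinarith
    -- MVT for deriv H on [t, α t]
    obtain ⟨c, hc, hc'⟩ := exists_hasDerivAt_eq_slope (deriv H) (deriv (deriv H)) htαt
      (fun x hx => ((h2 x (lt_of_lt_of_le ht0 hx.1)).continuousAt).continuousWithinAt)
      (fun x hx => (h2 x (lt_trans ht0 hx.1)).hasDerivAt)
    have hc0 : 0 < c := lt_trans ht0 hc.1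
    have hcT : T₀ ≤ c := le_trans (le_trans (le_max_left _ _) ht) hc.1.le
    have hcM : M ≤ c * deriv (deriv H) c := hT₀ c hcT
    have hDD : 0 ≤ deriv (deriv H) c := by
      by_contra h
      push_neg at h
      nlinarith
    have hne : α * t - t ≠ 0 := by nlinarith
    have hslope : deriv H (α * t) - deriv H t = deriv (deriv H) c * (α * t - t) :=
      (div_eq_iff hne).1 hc'.symm
    have hφt : φ t = α * (deriv (deriv H) c * (α * t - t)) := by
      simp only [hφ]; rw [← hslope]; ring
    rw [hφt]
    have hcαt : c ≤ α * t := hc.2.le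
    -- α * (D * (α-1) * t) ≥ (α-1) * M  since  t * D ≥ (t/c) * (c*D) ≥ (1/α) * M
    have h1' : M ≤ α * (t * deriv (deriv H) c) := by
      have : c * deriv (deriv H) c ≤ α * t * deriv (deriv H) c :=
        mul_le_mul_of_nonneg_right hcαt hDD
      nlinarith
    nlinarith
  -- now the main limit
  have main : Tendsto (fun t : ℝ => G t / t) atTop atTop := by
    rw [tendsto_atTop]
    intro b
    set M : ℝ := |b| + 1 with hMdef
    have hM0 : 0 ≤ M / (α - 1) := div_nonneg (by positivity) (by linarith)
    obtain ⟨T, hT1, hT⟩ := keyφ (M / (α - 1)) hM0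
    have hαM : ∀ t, T ≤ t → M ≤ φ t := by
      intro t ht
      have := hT t ht
      rwa [mul_div_cancel₀ _ (by linarith : α - 1 ≠ 0)] at this
    -- for t ≥ T, G t ≥ G T + M * (t - T)
    have hGrow : ∀ t, T ≤ t → G T + M * (t - T) ≤ G t := by
      intro t ht
      rcases eq_or_lt_of_le ht with rfl | hlt
      · simp
      obtain ⟨c, hc, hc'⟩ := exists_hasDerivAt_eq_slope G φ hlt
        (fun x hx => (hGd x (by linarith [hx.1] : (0:ℝ) < x)).continuousAt.continuousWithinAt)
        (fun x hx => hGd x (by linarith [hx.1]))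
      have hMc : M ≤ φ c := hαM c hc.1.le
      have : M ≤ (G t - G T) / (t - T) := by rw [← hc']; exact hMc
      have htT : 0 < t - T := by linarith
      have := (le_div_iff₀ htT).1 this
      linarith
    filter_upwards [eventually_ge_atTop (max T (M * T - G T))] with t ht
    have htT : T ≤ t := le_trans (le_max_left _ _) ht
    have ht2 : M * T - G T ≤ t := le_trans (le_max_right _ _) ht
    have ht0 : 0 < t := by linarith
    have hGt : G T + M * (t - T) ≤ G t := hGrow t htT
    rw [le_div_iff₀ ht0]
    have hMb : b + 1 ≤ M := by
      rw [hMdef]; cases le_or_gt 0 b with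
      | inl h => rw [abs_of_nonneg h]
      | inr h => rw [abs_of_neg h]; linarith
    nlinarith [abs_nonneg b]
  simpa [hG] using main
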